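/- Let (θ_k, r_k) be the global AEGD iterates with effective step sizes η_k := η r_{k+1}/g(θ_k). Suppose f is twice differentiable, α-strongly convex and L-smooth with global minimizer θ*. If η_j ≤ 2/(α+L) for all j with k₀ ≤ j < k (for some k₀ ≥ 0), then ‖θ_k − θ*‖ ≤ exp(−c₂ (k − k₀) r_k) ‖θ_{k₀} − θ*‖, where c₂ := αη/√(f(θ_{k₀})+c). -/

import Mathlib

set_option maxHeartbeats 1000000

open Filter Topology Finset

section AegdAux

open InnerProductSpace

private theorem aegd_inner_grad {n : ℕ} (f : EuclideanSpace ℝ (Fin n) → ℝ)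
    (x v : EuclideanSpace ℝ (Fin n)) (h : DifferentiableAt ℝ f x) :
    (inner ℝ (gradient f x) v : ℝ) = fderiv ℝ f x v := by
  have h2 := h.hasGradientAt
  rw [hasGradientAt_iff_hasFDerivAt] at h2
  rw [h2.fderiv]
  simp [InnerProductSpace.toDual_apply_apply]

private theorem aegd_grad_cont {n : ℕ} (f : EuclideanSpace ℝ (Fin n) → ℝ)
    (hf : ContDiff ℝ 2 f) : Continuous (gradient f) := by
  have : Continuous (fderiv ℝ f) := hf.continuous_fderiv (by norm_num)
  exact ((toDual ℝ (EuclideanSpace ℝ (Fin n))).symm.continuous).comp this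

private theorem aegd_quad_upper {n : ℕ} (f : EuclideanSpace ℝ (Fin n) → ℝ)
    (hf : ContDiff ℝ 2 f) (L : ℝ)
    (hLip : ∀ u v, ‖gradient f u - gradient f v‖ ≤ L * ‖u - v‖)
    (x y : EuclideanSpace ℝ (Fin n)) :
    f y ≤ f x + (inner ℝ (gradient f x) (y - x) : ℝ) + L / 2 * ‖y - x‖ ^ 2 := by
  set d := y - x with hd
  have hdiff : Differentiable ℝ f := hf.differentiable (by norm_num)
  set c : ℝ → EuclideanSpace ℝ (Fin n) := fun s => x + s • d with hc
  have hccont : Continuous c := continuous_const.add (continuous_id.smul continuous_const)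
  have hline : ∀ s : ℝ, HasDerivAt c d s := by
    intro s
    have : HasDerivAt (fun s : ℝ => s • d) ((1:ℝ) • d) s := (hasDerivAt_id s).smul_const d
    rw [one_smul] at this
    exact this.const_add x
  set φ' : ℝ → ℝ := fun s => (inner ℝ (gradient f (c s)) d : ℝ) with hφ'
  have hderiv : ∀ s : ℝ, HasDerivAt (fun s => f (c s)) (φ' s) s := by
    intro s
    have h1 := (hdiff (c s)).hasFDerivAt.comp_hasDerivAt s (hline s)
    have : φ' s = fderiv ℝ f (c s) d := aegd_inner_grad f (c s) d (hdiff (c s))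
    rw [this]
    exact h1
  have hcontφ' : Continuous φ' :=
    Continuous.inner ((aegd_grad_cont f hf).comp hccont) continuous_const
  have hFTC : ∫ s in (0:ℝ)..1, φ' s = f (c 1) - f (c 0) :=
    intervalIntegral.integral_eq_sub_of_hasDerivAt (f := fun s => f (c s))
      (fun t _ => hderiv t) (hcontφ'.intervalIntegrable 0 1)
  have hc0 : c 0 = x := by simp [hc]
  have hc1 : c 1 = y := by simp [hc, hd]
  have hbound : ∀ s ∈ Set.Icc (0:ℝ) 1,
      φ' s ≤ (inner ℝ (gradient f x) d : ℝ) + L * s * ‖d‖ ^ 2 := by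
    intro s hs
    have he : φ' s - (inner ℝ (gradient f x) d : ℝ)
        = (inner ℝ (gradient f (c s) - gradient f x) d : ℝ) := by
      rw [inner_sub_left]
    have h2 : (inner ℝ (gradient f (c s) - gradient f x) d : ℝ) ≤ L * s * ‖d‖ ^ 2 := by
      calc (inner ℝ (gradient f (c s) - gradient f x) d : ℝ)
          ≤ ‖gradient f (c s) - gradient f x‖ * ‖d‖ := real_inner_le_norm _ _
        _ ≤ (L * ‖c s - x‖) * ‖d‖ :=
            mul_le_mul_of_nonneg_right (hLip _ _) (norm_nonneg _)
        _ = (L * (s * ‖d‖)) * ‖d‖ := by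
            congr 2
            simp [hc, norm_smul, abs_of_nonneg hs.1]
        _ = L * s * ‖d‖ ^ 2 := by ring
    linarith
  have hcont2 : Continuous fun s : ℝ => (inner ℝ (gradient f x) d : ℝ) + L * s * ‖d‖ ^ 2 :=
    continuous_const.add ((continuous_const.mul continuous_id).mul continuous_const)
  have hint : ∫ s in (0:ℝ)..1, φ' s
      ≤ ∫ s in (0:ℝ)..1, ((inner ℝ (gradient f x) d : ℝ) + L * s * ‖d‖ ^ 2) :=
    intervalIntegral.integral_mono_on (by norm_num) (hcontφ'.intervalIntegrable 0 1)
      (hcont2.intervalIntegrable 0 1) hbound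
  have hval : ∫ s in (0:ℝ)..1, ((inner ℝ (gradient f x) d : ℝ) + L * s * ‖d‖ ^ 2) =
      (inner ℝ (gradient f x) d : ℝ) + L / 2 * ‖d‖ ^ 2 := by
    have h1 : ∫ s in (0:ℝ)..1, ((inner ℝ (gradient f x) d : ℝ) + L * s * ‖d‖ ^ 2)
        = (∫ _ in (0:ℝ)..1, (inner ℝ (gradient f x) d : ℝ))
          + ∫ s in (0:ℝ)..1, L * s * ‖d‖ ^ 2 := by
      apply intervalIntegral.integral_add
      · exact (continuous_const (y := (inner ℝ (gradient f x) d : ℝ))).intervalIntegrable 0 1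
      · exact ((continuous_const.mul continuous_id).mul continuous_const).intervalIntegrable 0 1
    rw [h1]
    have h2 : ∫ s in (0:ℝ)..1, L * s * ‖d‖ ^ 2 = L / 2 * ‖d‖ ^ 2 := by
      have : (fun s : ℝ => L * s * ‖d‖ ^ 2) = fun s : ℝ => (L * ‖d‖ ^ 2) * s := by
        funext s; ring
      rw [this, intervalIntegral.integral_const_mul, integral_id]
      ring
    rw [h2]
    simp
  rw [hFTC, hc0, hc1] at *
  linarith [hint, hval.le, hval.ge]

private theorem aegd_cocoercive_aux {n : ℕ} (h : EuclideanSpace ℝ (Fin n) → ℝ)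
    (p : EuclideanSpace ℝ (Fin n) → EuclideanSpace ℝ (Fin n)) (M : ℝ) (hM : 0 < M)
    (hU : ∀ x y, h y ≤ h x + (inner ℝ (p x) (y - x) : ℝ) + M / 2 * ‖y - x‖ ^ 2)
    (hC : ∀ x y, h x + (inner ℝ (p x) (y - x) : ℝ) ≤ h y) (x y : EuclideanSpace ℝ (Fin n)) :
    ‖p y - p x‖ ^ 2 / M ≤ (inner ℝ (p y - p x) (y - x) : ℝ) := by
  have hMne : M ≠ 0 := ne_of_gt hM
  have key : ∀ a b : EuclideanSpace ℝ (Fin n),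
      h a + (inner ℝ (p a) (b - a) : ℝ) + ‖p b - p a‖ ^ 2 / (2 * M) ≤ h b := by
    intro a b
    set w := p b - p a with hw
    set z := b - M⁻¹ • w with hz
    have h1 := hU b z
    have h2 := hC a z
    have hzb : z - b = -(M⁻¹ • w) := by rw [hz]; abel
    have e1 : (inner ℝ (p b) (z - b) : ℝ) = -(M⁻¹ * (inner ℝ (p b) w : ℝ)) := by
      rw [hzb, inner_neg_right, real_inner_smul_right]
    have e2 : ‖z - b‖ ^ 2 = M⁻¹ ^ 2 * ‖w‖ ^ 2 := by
      rw [hzb, norm_neg, norm_smul]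
      simp [abs_of_pos (inv_pos.mpr hM), mul_pow]
    have e3 : (inner ℝ (p a) (z - a) : ℝ)
        = (inner ℝ (p a) (b - a) : ℝ) - M⁻¹ * (inner ℝ (p a) w : ℝ) := by
      have : z - a = (b - a) - M⁻¹ • w := by rw [hz]; abel
      rw [this, inner_sub_right, real_inner_smul_right]
    have e4 : M⁻¹ * (inner ℝ (p b) w : ℝ) - M⁻¹ * (inner ℝ (p a) w : ℝ) = ‖w‖ ^ 2 / M := by
      rw [← mul_sub, ← inner_sub_left, ← hw, real_inner_self_eq_norm_sq]
      field_simp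
    have e8 : M / 2 * (M⁻¹ ^ 2 * ‖w‖ ^ 2) = ‖w‖ ^ 2 / (2 * M) := by
      field_simp
    have e9 : ‖w‖ ^ 2 / M - ‖w‖ ^ 2 / (2 * M) = ‖w‖ ^ 2 / (2 * M) := by
      field_simp
      ring
    rw [e1, e2, e8] at h1
    rw [e3] at h2
    linarith
  have k1 := key x y
  have k2 := key y x
  have e5 : (inner ℝ (p y) (x - y) : ℝ) = -(inner ℝ (p y) (y - x) : ℝ) := by
    rw [← inner_neg_right]; congr 1; abel
  have e6 : ‖p x - p y‖ = ‖p y - p x‖ := by rw [← norm_neg]; congr 1; abel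
  have e7 : (inner ℝ (p y - p x) (y - x) : ℝ)
      = (inner ℝ (p y) (y - x) : ℝ) - (inner ℝ (p x) (y - x) : ℝ) := inner_sub_left _ _ _
  have e9 : ‖p y - p x‖ ^ 2 / (2 * M) + ‖p y - p x‖ ^ 2 / (2 * M) = ‖p y - p x‖ ^ 2 / M := by
    field_simp
    ring
  rw [e6, e5] at k2
  linarith

private theorem aegd_strong_mono {n : ℕ} (f : EuclideanSpace ℝ (Fin n) → ℝ) (α : ℝ)
    (hsc : ∀ u v, f v + (inner ℝ (gradient f v) (u - v) : ℝ) + α / 2 * ‖u - v‖ ^ 2 ≤ f u)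
    (u v : EuclideanSpace ℝ (Fin n)) :
    α * ‖u - v‖ ^ 2 ≤ (inner ℝ (gradient f u - gradient f v) (u - v) : ℝ) := by
  have h1 := hsc u v
  have h2 := hsc v u
  have e1 : (inner ℝ (gradient f u) (v - u) : ℝ) = -(inner ℝ (gradient f u) (u - v) : ℝ) := by
    rw [← inner_neg_right]; congr 1; abel
  have e2 : (inner ℝ (gradient f u - gradient f v) (u - v) : ℝ)
      = (inner ℝ (gradient f u) (u - v) : ℝ) - (inner ℝ (gradient f v) (u - v) : ℝ) :=
    inner_sub_left _ _ _
  have e3 : ‖v - u‖ = ‖u - v‖ := by rw [← norm_neg]; congr 1; abel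
  rw [e1, e3] at h2
  linarith

private theorem aegd_interp {n : ℕ} (f : EuclideanSpace ℝ (Fin n) → ℝ) (α L : ℝ)
    (hα : 0 < α) (hαL : α ≤ L)
    (hsc : ∀ u v, f v + (inner ℝ (gradient f v) (u - v) : ℝ) + α / 2 * ‖u - v‖ ^ 2 ≤ f u)
    (hLip : ∀ u v, ‖gradient f u - gradient f v‖ ≤ L * ‖u - v‖)
    (hqu : ∀ x y, f y ≤ f x + (inner ℝ (gradient f x) (y - x) : ℝ) + L / 2 * ‖y - x‖ ^ 2)
    (u v : EuclideanSpace ℝ (Fin n)) :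
    α * L * ‖u - v‖ ^ 2 + ‖gradient f u - gradient f v‖ ^ 2
      ≤ (α + L) * (inner ℝ (gradient f u - gradient f v) (u - v) : ℝ) := by
  set G := gradient f u - gradient f v with hG
  set d := u - v with hd
  rcases eq_or_lt_of_le hαL with heq | hlt
  · have ha := aegd_strong_mono f α hsc u v
    have hg := hLip u v
    have hg2 : ‖G‖ ^ 2 ≤ L ^ 2 * ‖d‖ ^ 2 := by
      have h0 : (0:ℝ) ≤ L * ‖d‖ := mul_nonneg (le_of_lt (lt_of_lt_of_le hα hαL)) (norm_nonneg _)
      nlinarith [norm_nonneg G]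
    subst heq
    nlinarith [mul_le_mul_of_nonneg_left ha (le_of_lt hα), sq_nonneg ‖d‖]
  · set M := L - α with hM
    have hMpos : 0 < M := by simp [hM]; linarith
    set h : EuclideanSpace ℝ (Fin n) → ℝ := fun x => f x - α / 2 * ‖x‖ ^ 2 with hh
    set p : EuclideanSpace ℝ (Fin n) → EuclideanSpace ℝ (Fin n) :=
      fun x => gradient f x - α • x with hp
    have expand : ∀ x y : EuclideanSpace ℝ (Fin n),
        (inner ℝ (p x) (y - x) : ℝ) = (inner ℝ (gradient f x) (y - x) : ℝ)
          - α * ((inner ℝ x y : ℝ) - ‖x‖ ^ 2) := by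
      intro x y
      have hxy : (inner ℝ x (y - x) : ℝ) = (inner ℝ x y : ℝ) - ‖x‖ ^ 2 := by
        rw [inner_sub_right, real_inner_self_eq_norm_sq]
      rw [hp]
      simp only
      rw [inner_sub_left, real_inner_smul_left, hxy]
    have normexp : ∀ x y : EuclideanSpace ℝ (Fin n),
        ‖y - x‖ ^ 2 = ‖y‖ ^ 2 - 2 * (inner ℝ x y : ℝ) + ‖x‖ ^ 2 := by
      intro x y
      rw [norm_sub_sq_real]
      rw [real_inner_comm]
    have hC : ∀ x y, h x + (inner ℝ (p x) (y - x) : ℝ) ≤ h y := by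
      intro x y
      have h1 := hsc y x
      rw [hh]
      simp only
      rw [expand]
      have := normexp x y
      nlinarith []
    have hU : ∀ x y, h y ≤ h x + (inner ℝ (p x) (y - x) : ℝ) + M / 2 * ‖y - x‖ ^ 2 := by
      intro x y
      have h1 := hqu x y
      rw [hh]
      simp only
      rw [expand]
      have := normexp x y
      nlinarith []
    have key := aegd_cocoercive_aux h p M hMpos hU hC v u
    have hpd : p u - p v = G - α • d := by
      rw [hp, hG, hd]
      simp only
      rw [smul_sub]
      abel
    rw [hpd] at key
    have key' : ‖G - α • d‖ ^ 2 ≤ (inner ℝ (G - α • d) d : ℝ) * M := (div_le_iff₀ hMpos).mp key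
    have e1 : ‖G - α • d‖ ^ 2 = ‖G‖ ^ 2 - 2 * α * (inner ℝ G d : ℝ) + α ^ 2 * ‖d‖ ^ 2 := by
      rw [norm_sub_sq_real, real_inner_smul_right, norm_smul]
      rw [mul_pow, Real.norm_eq_abs, sq_abs]
      ring
    have e2 : (inner ℝ (G - α • d) d : ℝ) = (inner ℝ G d : ℝ) - α * ‖d‖ ^ 2 := by
      rw [inner_sub_left, real_inner_smul_left, real_inner_self_eq_norm_sq]
    rw [e1, e2, hM] at key'
    nlinarith [key']

private theorem aegd_grad_min_zero {n : ℕ} (f : EuclideanSpace ℝ (Fin n) → ℝ)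
    (hdiff : Differentiable ℝ f) (θstar : EuclideanSpace ℝ (Fin n))
    (hmin : ∀ x, f θstar ≤ f x) : gradient f θstar = 0 := by
  have hloc : IsLocalMin f θstar := Filter.Eventually.of_forall (fun x => hmin x)
  have hfd : fderiv ℝ f θstar = 0 := hloc.fderiv_eq_zero
  have h2 := (hdiff θstar).hasGradientAt
  rw [hasGradientAt_iff_hasFDerivAt] at h2
  have h3 := h2.fderiv
  rw [hfd] at h3
  have := congrArg (InnerProductSpace.toDual ℝ (EuclideanSpace ℝ (Fin n))).symm h3
  simp [gradient, hfd]

private theorem aegd_contraction {n : ℕ} (f : EuclideanSpace ℝ (Fin n) → ℝ) (α L : ℝ)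
    (hα : 0 < α) (hαL : α ≤ L)
    (hinterp : ∀ u v, α * L * ‖u - v‖ ^ 2 + ‖gradient f u - gradient f v‖ ^ 2
      ≤ (α + L) * (inner ℝ (gradient f u - gradient f v) (u - v) : ℝ))
    (hmono : ∀ u v, α * ‖u - v‖ ^ 2 ≤ (inner ℝ (gradient f u - gradient f v) (u - v) : ℝ))
    (θstar : EuclideanSpace ℝ (Fin n)) (hgrad0 : gradient f θstar = 0)
    (x : EuclideanSpace ℝ (Fin n)) (t : ℝ) (ht0 : 0 ≤ t) (ht : t * (α + L) ≤ 2) :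
    ‖x - t • gradient f x - θstar‖ ≤ (1 - t * α) * ‖x - θstar‖ := by
  set G := gradient f x with hG
  set d := x - θstar with hd
  have hALpos : 0 < α + L := by linarith
  have h1 : gradient f x - gradient f θstar = G := by rw [hgrad0, hG]; abel
  have hI := hinterp x θstar
  have hM := hmono x θstar
  rw [h1] at hI hM
  rw [← hd] at hI hM
  have htα : t * α ≤ 1 := by nlinarith
  have hrw : x - t • G - θstar = d - t • G := by rw [hd]; abel
  rw [hrw]
  have hsq : ‖d - t • G‖ ^ 2 ≤ ((1 - t * α) * ‖d‖) ^ 2 := by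
    have e1 : ‖d - t • G‖ ^ 2 = ‖d‖ ^ 2 - 2 * t * (inner ℝ G d : ℝ) + t ^ 2 * ‖G‖ ^ 2 := by
      rw [norm_sub_sq_real, real_inner_smul_right, norm_smul, mul_pow,
        Real.norm_eq_abs, sq_abs, real_inner_comm]
      ring
    have hCS : (inner ℝ G d : ℝ) ≤ ‖G‖ * ‖d‖ := real_inner_le_norm _ _
    set S : ℝ := ‖G‖ ^ 2 - α ^ 2 * ‖d‖ ^ 2 with hS
    set B : ℝ := (inner ℝ G d : ℝ) - α * ‖d‖ ^ 2 with hB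
    have hBnn : 0 ≤ B := by rw [hB]; linarith [hM]
    have hSnn : 0 ≤ S := by
      rcases eq_or_lt_of_le (norm_nonneg d) with hzero | hpos
      · have hd2 : ‖d‖ ^ 2 = 0 := by rw [← hzero]; ring
        rw [hS]
        nlinarith [sq_nonneg ‖G‖]
      · have h4 : α * ‖d‖ * ‖d‖ ≤ ‖G‖ * ‖d‖ := by linarith [hM, hCS]
        have h5 : α * ‖d‖ ≤ ‖G‖ := le_of_mul_le_mul_right h4 hpos
        have h6 := mul_self_le_mul_self (mul_nonneg (le_of_lt hα) (norm_nonneg d)) h5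
        rw [hS]
        nlinarith [h6]
    have hgain : S ≤ (α + L) * B := by rw [hS, hB]; nlinarith [hI]
    have q1 : t ^ 2 * S ≤ t ^ 2 * ((α + L) * B) :=
      mul_le_mul_of_nonneg_left hgain (sq_nonneg t)
    have q3 : t ^ 2 * ((α + L) * B) ≤ 2 * (t * B) := by
      have := mul_le_mul_of_nonneg_right ht (mul_nonneg ht0 hBnn)
      calc t ^ 2 * ((α + L) * B) = t * (α + L) * (t * B) := by ring
        _ ≤ 2 * (t * B) := this
    have q4 : 2 * (t * B) = 2 * t * (inner ℝ G d : ℝ) - 2 * t * (α * ‖d‖ ^ 2) := by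
      rw [hB]; ring
    have eS : t ^ 2 * ‖G‖ ^ 2 = t ^ 2 * S + t ^ 2 * (α ^ 2 * ‖d‖ ^ 2) := by
      rw [hS]; ring
    have eR : ((1 - t * α) * ‖d‖) ^ 2
        = ‖d‖ ^ 2 - 2 * t * (α * ‖d‖ ^ 2) + t ^ 2 * (α ^ 2 * ‖d‖ ^ 2) := by ring
    rw [e1, eR]
    linarith [q1, q3, q4, eS]
  have hb : 0 ≤ (1 - t * α) * ‖d‖ := mul_nonneg (by linarith) (norm_nonneg _)
  have := Real.sqrt_le_sqrt hsq
  rwa [Real.sqrt_sq (norm_nonneg _), Real.sqrt_sq hb] at this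

private theorem aegd_grad_sqrt {n : ℕ} (f : EuclideanSpace ℝ (Fin n) → ℝ)
    (hdiff : Differentiable ℝ f) (c : ℝ) (hfc : ∀ x, 0 < f x + c)
    (x : EuclideanSpace ℝ (Fin n)) :
    gradient (fun y => Real.sqrt (f y + c)) x
      = (2 * Real.sqrt (f x + c))⁻¹ • gradient f x := by
  have h1 : HasFDerivAt (fun y => f y + c) (fderiv ℝ f x) x :=
    (hdiff x).hasFDerivAt.add_const c
  have h2 : HasDerivAt Real.sqrt (1 / (2 * Real.sqrt (f x + c))) (f x + c) :=
    Real.hasDerivAt_sqrt (ne_of_gt (hfc x))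
  have h3 : HasFDerivAt (fun y => Real.sqrt (f y + c))
      ((1 / (2 * Real.sqrt (f x + c))) • fderiv ℝ f x) x := h2.comp_hasFDerivAt x h1
  have h4 : InnerProductSpace.toDual ℝ (EuclideanSpace ℝ (Fin n)) (gradient f x)
      = fderiv ℝ f x := by
    have h5 := (hdiff x).hasGradientAt
    rw [hasGradientAt_iff_hasFDerivAt] at h5
    exact h5.unique (hdiff x).hasFDerivAt
  have h6 : HasGradientAt (fun y => Real.sqrt (f y + c))
      ((2 * Real.sqrt (f x + c))⁻¹ • gradient f x) x := by
    rw [hasGradientAt_iff_hasFDerivAt, map_smul, h4]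
    have : (2 * Real.sqrt (f x + c))⁻¹ = 1 / (2 * Real.sqrt (f x + c)) := by rw [one_div]
    rw [this]
    exact h3
  exact h6.gradient

end AegdAux


/-- For the global AEGD iterates, if `f` is twice differentiable,
`α`-strongly convex and `L`-smooth with global minimizer `θ*`, and `η_j ≤ 2/(α+L)`
for all `k₀ ≤ j < k`, then `‖θ_k − θ*‖ ≤ exp(−c₂ (k − k₀) r_k) ‖θ_{k₀} − θ*‖` with
`c₂ := αη/√(f(θ_{k₀})+c)`. -/
theorem aegd_strongly_convex_rate {n : ℕ} (f : EuclideanSpace ℝ (Fin n) → ℝ)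
    (hf : ContDiff ℝ 2 f) (hbdd : ∃ B : ℝ, ∀ x, B ≤ f x)
    (c : ℝ) (hc : 0 < c) (hfc : ∀ x, 0 < f x + c)
    (g : EuclideanSpace ℝ (Fin n) → ℝ) (hg : g = fun x => Real.sqrt (f x + c))
    (α : ℝ) (hα : 0 < α)
    (hsc : ∀ u v, f v + (inner ℝ (gradient f v) (u - v) : ℝ) + α / 2 * ‖u - v‖ ^ 2 ≤ f u)
    (L : ℝ) (hL : 0 < L)
    (hLip : ∀ u v, ‖gradient f u - gradient f v‖ ≤ L * ‖u - v‖)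
    (θstar : EuclideanSpace ℝ (Fin n)) (hmin : ∀ x, f θstar ≤ f x)
    (η : ℝ) (hη : 0 < η)
    (θ : ℕ → EuclideanSpace ℝ (Fin n)) (r : ℕ → ℝ)
    (hr0 : r 0 = g (θ 0))
    (hr : ∀ k, r (k + 1) = r k / (1 + 2 * η * ‖gradient g (θ k)‖ ^ 2))
    (hθ : ∀ k, θ (k + 1) = θ k - (2 * η * r (k + 1)) • gradient g (θ k))
    (ηk : ℕ → ℝ) (hηk : ∀ k, ηk k = η * r (k + 1) / g (θ k))
    (k₀ k : ℕ) (hk : k₀ ≤ k)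
    (hstep : ∀ j, k₀ ≤ j → j < k → ηk j ≤ 2 / (α + L)) :
    ‖θ k - θstar‖
      ≤ Real.exp (-(α * η / Real.sqrt (f (θ k₀) + c)) * ((k : ℝ) - (k₀ : ℝ)) * r k)
        * ‖θ k₀ - θstar‖ := by
  have hdiff : Differentiable ℝ f := hf.differentiable (by norm_num)
  have hgval : ∀ x, g x = Real.sqrt (f x + c) := fun x => by rw [hg]
  have hgpos : ∀ x, 0 < g x := fun x => by
    rw [hgval]; exact Real.sqrt_pos.mpr (hfc x)
  rcases Nat.eq_zero_or_pos n with hn | hn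
  · subst hn
    have hz : ∀ v : EuclideanSpace ℝ (Fin 0), ‖v‖ = 0 := by
      intro v
      simp [EuclideanSpace.norm_eq]
    rw [hz (θ k - θstar), hz (θ k₀ - θstar), mul_zero]
  · have hαL : α ≤ L := by
      set e : EuclideanSpace ℝ (Fin n) := EuclideanSpace.single ⟨0, hn⟩ (1:ℝ) with he
      have hne : ‖e - 0‖ = 1 := by
        rw [sub_zero, he, EuclideanSpace.norm_single]; norm_num
      have h1 := aegd_strong_mono f α hsc e 0
      have h2 := real_inner_le_norm (gradient f e - gradient f 0) (e - 0)
      have h3 := hLip e 0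
      rw [hne] at h1 h2 h3
      nlinarith [h1, h2, h3]
    have hqu := aegd_quad_upper f hf L hLip
    have hmono := aegd_strong_mono f α hsc
    have hinterp := aegd_interp f α L hα hαL hsc hLip hqu
    have hgrad0 := aegd_grad_min_zero f hdiff θstar hmin
    have hALpos : 0 < α + L := by linarith
    have hrpos : ∀ m, 0 < r m := by
      intro m
      induction m with
      | zero => rw [hr0]; exact hgpos _
      | succ m ih =>
        rw [hr m]
        apply div_pos ih
        positivity
    have hrsucc : ∀ m, r (m + 1) ≤ r m := by
      intro m
      rw [hr m]
      have hden : (0:ℝ) ≤ 2 * η * ‖gradient g (θ m)‖ ^ 2 := by positivity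
      exact div_le_self (hrpos m).le (by linarith)
    have hrdec : ∀ i j : ℕ, i ≤ j → r j ≤ r i := fun i j hij =>
      antitone_nat_of_succ_le hrsucc hij
    have hgradg : ∀ x, gradient g x = (2 * g x)⁻¹ • gradient f x := by
      intro x
      have h1 := aegd_grad_sqrt f hdiff c hfc x
      rw [hg]
      simpa using h1
    have hθstep : ∀ j, θ (j + 1) = θ j - ηk j • gradient f (θ j) := by
      intro j
      have hsc1 : (2 * η * r (j + 1)) * (2 * g (θ j))⁻¹ = η * r (j + 1) / g (θ j) := by
        have hne := (hgpos (θ j)).ne'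
        field_simp
      rw [hθ j, hgradg (θ j), smul_smul, hsc1, hηk j]
    have hstep2 : ∀ j, k₀ ≤ j → j < k → ηk j * (α + L) ≤ 2 := by
      intro j h1 h2
      exact (le_div_iff₀ hALpos).mp (hstep j h1 h2)
    have hηpos : ∀ j, 0 < ηk j := by
      intro j
      rw [hηk]
      exact div_pos (mul_pos hη (hrpos _)) (hgpos _)
    have hfdec : ∀ j, k₀ ≤ j → j ≤ k → f (θ j) ≤ f (θ k₀) := by
      intro j
      induction j with
      | zero =>
        intro h1 _
        have h0 : k₀ = 0 := Nat.le_zero.mp h1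
        rw [h0]
      | succ j ih =>
        intro h1 h2
        rcases Nat.lt_or_ge k₀ (j + 1) with hlt | hge
        · have hk0j : k₀ ≤ j := Nat.lt_succ_iff.mp hlt
          have hjk : j < k := h2
          have hprev := ih hk0j (le_of_lt hjk)
          have ht0 : 0 ≤ ηk j := (hηpos j).le
          have htL : ηk j * (α + L) ≤ 2 := hstep2 j hk0j hjk
          have hq := hqu (θ j) (θ (j + 1))
          have hy : θ (j + 1) - θ j = -(ηk j • gradient f (θ j)) := by
            rw [hθstep j]; abel
          rw [hy, inner_neg_right, real_inner_smul_right, real_inner_self_eq_norm_sq,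
            norm_neg, norm_smul, mul_pow, Real.norm_eq_abs, sq_abs] at hq
          have hG2 : (0:ℝ) ≤ ‖gradient f (θ j)‖ ^ 2 := sq_nonneg _
          have htL2 : ηk j * L ≤ 2 := by nlinarith [mul_nonneg ht0 hα.le]
          have hkey : L / 2 * (ηk j ^ 2 * ‖gradient f (θ j)‖ ^ 2)
              ≤ ηk j * ‖gradient f (θ j)‖ ^ 2 := by
            have h7 : (0:ℝ) ≤ 2 - ηk j * L := by linarith
            nlinarith [mul_nonneg h7 (mul_nonneg ht0 hG2)]
          linarith
        · have heq : j + 1 = k₀ := Nat.le_antisymm hge h1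
          rw [heq]
    have hgdec : ∀ j, k₀ ≤ j → j ≤ k → g (θ j) ≤ g (θ k₀) := by
      intro j h1 h2
      rw [hgval, hgval]
      exact Real.sqrt_le_sqrt (by linarith [hfdec j h1 h2])
    set β : ℝ := α * (η * r k / g (θ k₀)) with hβ
    have hβ' : ∀ j, k₀ ≤ j → j < k → β ≤ α * ηk j := by
      intro j h1 h2
      rw [hβ, hηk j]
      apply mul_le_mul_of_nonneg_left _ hα.le
      apply div_le_div₀ (mul_nonneg hη.le (hrpos (j + 1)).le) _ (hgpos (θ j))
        (hgdec j h1 (le_of_lt h2))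
      exact mul_le_mul_of_nonneg_left (hrdec (j + 1) k h2) hη.le
    have main : ∀ m : ℕ, k₀ + m ≤ k →
        ‖θ (k₀ + m) - θstar‖ ≤ Real.exp (-β * m) * ‖θ k₀ - θstar‖ := by
      intro m
      induction m with
      | zero => intro _; simp
      | succ m ih =>
        intro hm
        have hm' : k₀ + m ≤ k := by omega
        have hlt : k₀ + m < k := by omega
        have hIH := ih hm'
        set j := k₀ + m with hj
        have ht0 : 0 ≤ ηk j := (hηpos j).le
        have htc : ηk j * (α + L) ≤ 2 := hstep2 j (by omega) hlt
        have hcon := aegd_contraction f α L hα hαL hinterp hmono θstar hgrad0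
          (θ j) (ηk j) ht0 htc
        rw [← hθstep j] at hcon
        have h1 : 1 - ηk j * α ≤ Real.exp (-β) := by
          have h2 : β ≤ α * ηk j := hβ' j (by omega) hlt
          have h3 := Real.add_one_le_exp (-(ηk j * α))
          have h4 : Real.exp (-(ηk j * α)) ≤ Real.exp (-β) :=
            Real.exp_le_exp.mpr (by linarith [mul_comm α (ηk j)])
          linarith
        have hnn : (0:ℝ) ≤ ‖θ j - θstar‖ := norm_nonneg _
        have hchain : ‖θ (j + 1) - θstar‖ ≤ Real.exp (-β) * ‖θ j - θstar‖ :=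
          le_trans hcon (mul_le_mul_of_nonneg_right h1 hnn)
        have hidx : k₀ + (m + 1) = j + 1 := by omega
        rw [hidx]
        have hmul : Real.exp (-β) * Real.exp (-β * m) = Real.exp (-β * (m + 1 : ℕ)) := by
          rw [← Real.exp_add]
          congr 1
          push_cast
          ring
        calc ‖θ (j + 1) - θstar‖ ≤ Real.exp (-β) * ‖θ j - θstar‖ := hchain
          _ ≤ Real.exp (-β) * (Real.exp (-β * m) * ‖θ k₀ - θstar‖) :=
              mul_le_mul_of_nonneg_left hIH (Real.exp_nonneg _)
          _ = Real.exp (-β * (m + 1 : ℕ)) * ‖θ k₀ - θstar‖ := by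
              rw [← mul_assoc, hmul]
    have hfin := main (k - k₀) (by omega)
    have hkk : k₀ + (k - k₀) = k := by omega
    rw [hkk] at hfin
    have hcast : ((k - k₀ : ℕ) : ℝ) = (k : ℝ) - (k₀ : ℝ) := Nat.cast_sub hk
    rw [hcast] at hfin
    have hexp : -β * ((k : ℝ) - (k₀ : ℝ))
        = -(α * η / Real.sqrt (f (θ k₀) + c)) * ((k : ℝ) - (k₀ : ℝ)) * r k := by
      rw [hβ, ← hgval (θ k₀)]
      ring
    rw [hexp] at hfin
    exact hfin
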